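/- Let a ≤ 0, n ≥ 1, and let f, g : [0,∞) → ℝ be bounded measurable functions with correlation measure ϖ*_{f,g} as above. Define τ_{f,g}(t) = (1/2)∫₀ᵗ (2 f(s)g(s) + f(s)ε_g(s) + ε_f(s)g(s)) ds, where ε_f(t) = a∫₀ᵗ e^{a(t-v)} f(v)(1+e^{2av}) dv. Then sup_{0≤t≤n} |τ_{f,g}(t)| ≤ 4·ϖ*_{f,g}. -/

import Mathlib

open MeasureTheory Real

/-- ε_f(t) = a ∫₀ᵗ e^{a(t-v)} f(v)(1+e^{2av}) dv. -/
noncomputable def epsTransform (a : ℝ) (f : ℝ → ℝ) : ℝ → ℝ := fun t =>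
  a * ∫ v in (0:ℝ)..t, Real.exp (a * (t - v)) * f v * (1 + Real.exp (2 * a * v))

/-- τ_{f,g}(t) = (1/2) ∫₀ᵗ (2 f g + f ε_g + ε_f g) ds. -/
noncomputable def tauTransform (a : ℝ) (f g : ℝ → ℝ) : ℝ → ℝ := fun t =>
  (1 / 2) * ∫ s in (0:ℝ)..t,
    (2 * f s * g s + f s * epsTransform a g s + epsTransform a f s * g s)

private lemma II_of_bdd {h : ℝ → ℝ} (hm : Measurable h) {C : ℝ} (hb : ∀ x, |h x| ≤ C)
    (c d : ℝ) : IntervalIntegrable h volume c d := by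
  rw [intervalIntegrable_iff]
  haveI : IsFiniteMeasure (volume.restrict (Set.uIoc c d)) := by
    constructor
    rw [Measure.restrict_apply_univ, Set.uIoc, Real.volume_Ioc]
    exact ENNReal.ofReal_lt_top
  exact (MeasureTheory.integrable_const C).mono' hm.aestronglyMeasurable
    (Filter.Eventually.of_forall fun x => by simpa using hb x)

private lemma expint (c u : ℝ) :
    ∫ r in (0:ℝ)..u, c * Real.exp (c * r) = Real.exp (c * u) - 1 := by
  have h : ∀ r ∈ Set.uIcc (0:ℝ) u,
      HasDerivAt (fun x => Real.exp (c * x)) (c * Real.exp (c * r)) r := by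
    intro r _
    have := ((hasDerivAt_id r).const_mul c).exp
    simpa [mul_comm] using this
  have hcont : Continuous fun r => c * Real.exp (c * r) := by
    exact continuous_const.mul (Real.continuous_exp.comp (continuous_const.mul continuous_id))
  simpa using intervalIntegral.integral_eq_sub_of_hasDerivAt h (hcont.intervalIntegrable _ _)

private lemma expint_neg (a t : ℝ) :
    ∫ w in (0:ℝ)..t, (-a) * Real.exp (a * w) = 1 - Real.exp (a * t) := by
  have h : (fun w => (-a) * Real.exp (a * w)) = fun w => -(a * Real.exp (a * w)) := by
    funext w; ring
  rw [h, intervalIntegral.integral_neg, expint]; ring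

/-- Fubini for a triangle: swap the order of integration over `{0 ≤ w ≤ s ≤ t}`. -/
private lemma triangle_swap (K : ℝ → ℝ → ℝ)
    (hK : Measurable (fun p : ℝ × ℝ => K p.1 p.2))
    {t C : ℝ} (ht : 0 ≤ t)
    (hC : ∀ s ∈ Set.Icc (0:ℝ) t, ∀ w ∈ Set.Icc (0:ℝ) t, |K s w| ≤ C) :
    ((∫ s in (0:ℝ)..t, ∫ w in (0:ℝ)..s, K s w)
      = ∫ w in (0:ℝ)..t, ∫ s in w..t, K s w) ∧
      IntervalIntegrable (fun w => ∫ s in w..t, K s w) volume 0 t := by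
  have hμfin : IsFiniteMeasure (volume.restrict (Set.Ioc (0:ℝ) t)) := by
    constructor
    rw [Measure.restrict_apply_univ, Real.volume_Ioc]
    exact ENNReal.ofReal_lt_top
  haveI := hμfin
  set G : ℝ × ℝ → ℝ := Set.indicator {p : ℝ × ℝ | p.2 ≤ p.1} (fun p => K p.1 p.2) with hG
  have hC0 : 0 ≤ C :=
    le_trans (abs_nonneg _) (hC t (Set.right_mem_Icc.2 ht) t (Set.right_mem_Icc.2 ht))
  have hGmeas : Measurable G := hK.indicator (measurableSet_le measurable_snd measurable_fst)
  have hGbd : ∀ p : ℝ × ℝ, p ∈ Set.Ioc (0:ℝ) t ×ˢ Set.Ioc (0:ℝ) t → ‖G p‖ ≤ C := by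
    intro p hp
    rcases hp with ⟨h1, h2⟩
    by_cases h : p ∈ {p : ℝ × ℝ | p.2 ≤ p.1}
    · rw [hG, Set.indicator_of_mem h]
      simpa using hC p.1 (Set.Ioc_subset_Icc_self h1) p.2 (Set.Ioc_subset_Icc_self h2)
    · rw [hG, Set.indicator_of_notMem h]; simpa using hC0
  have hGint : Integrable G ((volume.restrict (Set.Ioc (0:ℝ) t)).prod
      (volume.restrict (Set.Ioc (0:ℝ) t))) := by
    refine (integrable_const C).mono' hGmeas.aestronglyMeasurable ?_
    rw [Measure.prod_restrict]
    exact (ae_restrict_iff' (measurableSet_Ioc.prod measurableSet_Ioc)).2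
      (Filter.Eventually.of_forall hGbd)
  have hL : ∀ s ∈ Set.Ioc (0:ℝ) t,
      (∫ w, G (s, w) ∂(volume.restrict (Set.Ioc (0:ℝ) t))) = ∫ w in (0:ℝ)..s, K s w := by
    intro s hs
    have h1 : (fun w => G (s, w)) = Set.indicator (Set.Iic s) (K s) := by
      funext w
      by_cases h : w ≤ s
      · simp [hG, Set.indicator, h]
      · simp [hG, Set.indicator, h]
    rw [h1, setIntegral_indicator measurableSet_Iic, Set.Ioc_inter_Iic,
      inf_eq_right.2 hs.2, intervalIntegral.integral_of_le hs.1.le]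
  have hR : ∀ w ∈ Set.Ioc (0:ℝ) t,
      (∫ s, G (s, w) ∂(volume.restrict (Set.Ioc (0:ℝ) t))) = ∫ s in w..t, K s w := by
    intro w hw
    have h1 : (fun s => G (s, w)) = Set.indicator (Set.Ici w) (fun s => K s w) := by
      funext s
      by_cases h : w ≤ s
      · simp [hG, Set.indicator, h]
      · simp [hG, Set.indicator, h]
    have h2 : Set.Ioc (0:ℝ) t ∩ Set.Ici w = Set.Icc w t := by
      ext x
      simp only [Set.mem_inter_iff, Set.mem_Ioc, Set.mem_Ici, Set.mem_Icc]
      constructor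
      · rintro ⟨⟨_, hx2⟩, hx3⟩; exact ⟨hx3, hx2⟩
      · rintro ⟨hx1, hx2⟩; exact ⟨⟨lt_of_lt_of_le hw.1 hx1, hx2⟩, hx1⟩
    rw [h1, setIntegral_indicator measurableSet_Ici, h2, integral_Icc_eq_integral_Ioc,
      intervalIntegral.integral_of_le hw.2]
  have hswap := MeasureTheory.integral_integral_swap
    (f := fun s w => G (s, w)) (μ := volume.restrict (Set.Ioc (0:ℝ) t))
    (ν := volume.restrict (Set.Ioc (0:ℝ) t)) hGint
  constructor
  · rw [intervalIntegral.integral_of_le ht, intervalIntegral.integral_of_le ht]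
    calc (∫ s in Set.Ioc (0:ℝ) t, ∫ w in (0:ℝ)..s, K s w)
        = ∫ s in Set.Ioc (0:ℝ) t, ∫ w, G (s, w) ∂(volume.restrict (Set.Ioc (0:ℝ) t)) :=
          setIntegral_congr_fun measurableSet_Ioc (fun s hs => (hL s hs).symm)
      _ = ∫ w in Set.Ioc (0:ℝ) t, ∫ s, G (s, w) ∂(volume.restrict (Set.Ioc (0:ℝ) t)) := hswap
      _ = ∫ w in Set.Ioc (0:ℝ) t, ∫ s in w..t, K s w :=
          setIntegral_congr_fun measurableSet_Ioc (fun w hw => hR w hw)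
  · rw [intervalIntegrable_iff, Set.uIoc_of_le ht]
    exact (hGint.integral_prod_right).congr
      ((ae_restrict_iff' measurableSet_Ioc).2 (Filter.Eventually.of_forall hR))

/-- Integration-by-parts bound: `|∫₀ᵀ h(u)(1+e^{2au}) du| ≤ 2W` when the primitive
of `h` is bounded by `W` on `[0, T]`. -/
private lemma inner_bound (a : ℝ) (ha : a ≤ 0) (h : ℝ → ℝ) (hm : Measurable h)
    {Ch : ℝ} (hb : ∀ x, |h x| ≤ Ch) (W : ℝ) {T : ℝ} (hT0 : 0 ≤ T)
    (hFW : ∀ r ∈ Set.Icc (0:ℝ) T, |∫ u in (0:ℝ)..r, h u| ≤ W) :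
    |∫ u in (0:ℝ)..T, h u * (1 + Real.exp (2 * a * u))| ≤ 2 * W := by
  have hhi : ∀ c d : ℝ, IntervalIntegrable h volume c d := II_of_bdd hm hb
  have hFc : Continuous fun r => ∫ u in (0:ℝ)..r, h u :=
    intervalIntegral.continuous_primitive hhi 0
  have hW0 : 0 ≤ W := le_trans (abs_nonneg _) (hFW 0 (Set.left_mem_Icc.2 hT0))
  have hCh0 : 0 ≤ Ch := le_trans (abs_nonneg _) (hb 0)
  have cont2 : Continuous fun r => 2 * a * Real.exp (2 * a * r) :=
    continuous_const.mul (Real.continuous_exp.comp (continuous_const.mul continuous_id))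
  -- split the integral
  have hmul : IntervalIntegrable (fun u => h u * (Real.exp (2 * a * u) - 1)) volume 0 T :=
    (hhi 0 T).mul_continuousOn
      (Continuous.continuousOn
        ((Real.continuous_exp.comp (continuous_const.mul continuous_id)).sub continuous_const))
  have hsplit : (∫ u in (0:ℝ)..T, h u * (1 + Real.exp (2 * a * u)))
      = (∫ u in (0:ℝ)..T, h u) * 2
        + ∫ u in (0:ℝ)..T, h u * (Real.exp (2 * a * u) - 1) := by
    have heq : (∫ u in (0:ℝ)..T, h u * (1 + Real.exp (2 * a * u)))
        = ∫ u in (0:ℝ)..T, (h u * 2 + h u * (Real.exp (2 * a * u) - 1)) :=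
      intervalIntegral.integral_congr fun u _ => by ring
    rw [heq, intervalIntegral.integral_add ((hhi 0 T).mul_const 2) hmul,
      intervalIntegral.integral_mul_const]
  -- rewrite (e^{2au} - 1) as an integral
  have hstep2 : (∫ u in (0:ℝ)..T, h u * (Real.exp (2 * a * u) - 1))
      = ∫ u in (0:ℝ)..T, ∫ r in (0:ℝ)..u, h u * (2 * a * Real.exp (2 * a * r)) := by
    refine intervalIntegral.integral_congr fun u _ => ?_
    rw [← expint (2 * a) u]
    exact (intervalIntegral.integral_const_mul _ _).symm
  -- swap the order of integration
  have hK2m : Measurable (fun p : ℝ × ℝ => h p.1 * (2 * a * Real.exp (2 * a * p.2))) :=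
    (hm.comp measurable_fst).mul
      ((Real.measurable_exp.comp (measurable_snd.const_mul (2 * a))).const_mul (2 * a))
  have hK2b : ∀ u ∈ Set.Icc (0:ℝ) T, ∀ r ∈ Set.Icc (0:ℝ) T,
      |h u * (2 * a * Real.exp (2 * a * r))| ≤ Ch * (2 * (-a)) := by
    intro u _ r hr
    rw [abs_mul]
    refine mul_le_mul (hb u) ?_ (abs_nonneg _) hCh0
    have h1 : |2 * a * Real.exp (2 * a * r)| = (2 * (-a)) * Real.exp (2 * a * r) := by
      rw [abs_mul, abs_of_pos (Real.exp_pos _), abs_of_nonpos (by linarith)]; ring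
    rw [h1]
    calc (2 * (-a)) * Real.exp (2 * a * r) ≤ (2 * (-a)) * 1 := by
          refine mul_le_mul_of_nonneg_left ?_ (by linarith)
          exact Real.exp_le_one_iff.2 (mul_nonpos_of_nonpos_of_nonneg (by linarith) hr.1)
      _ = 2 * (-a) := mul_one _
  obtain ⟨hswap, -⟩ := triangle_swap (fun u r => h u * (2 * a * Real.exp (2 * a * r)))
    hK2m hT0 hK2b
  have hinner : (fun r => ∫ u in r..T, h u * (2 * a * Real.exp (2 * a * r)))
      = fun r => ((∫ u in (0:ℝ)..T, h u) - ∫ u in (0:ℝ)..r, h u)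
          * (2 * a * Real.exp (2 * a * r)) := by
    funext r
    rw [intervalIntegral.integral_mul_const,
      intervalIntegral.integral_interval_sub_left (hhi 0 T) (hhi 0 r)]
  have hout : (∫ r in (0:ℝ)..T,
        ((∫ u in (0:ℝ)..T, h u) - ∫ u in (0:ℝ)..r, h u) * (2 * a * Real.exp (2 * a * r)))
      = (∫ u in (0:ℝ)..T, h u) * (Real.exp (2 * a * T) - 1)
        - ∫ r in (0:ℝ)..T, (∫ u in (0:ℝ)..r, h u) * (2 * a * Real.exp (2 * a * r)) := by
    have hc1 : IntervalIntegrable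
        (fun r => (∫ u in (0:ℝ)..T, h u) * (2 * a * Real.exp (2 * a * r))) volume 0 T :=
      (continuous_const.mul cont2).intervalIntegrable _ _
    have hc2 : IntervalIntegrable
        (fun r => (∫ u in (0:ℝ)..r, h u) * (2 * a * Real.exp (2 * a * r))) volume 0 T :=
      (hFc.mul cont2).intervalIntegrable _ _
    have heq : (fun r => ((∫ u in (0:ℝ)..T, h u) - ∫ u in (0:ℝ)..r, h u)
          * (2 * a * Real.exp (2 * a * r)))
        = fun r => (∫ u in (0:ℝ)..T, h u) * (2 * a * Real.exp (2 * a * r))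
          - (∫ u in (0:ℝ)..r, h u) * (2 * a * Real.exp (2 * a * r)) := by
      funext r; ring
    rw [heq, intervalIntegral.integral_sub hc1 hc2, intervalIntegral.integral_const_mul,
      expint]
  have hE : (∫ u in (0:ℝ)..T, h u * (1 + Real.exp (2 * a * u)))
      = (∫ u in (0:ℝ)..T, h u) * (1 + Real.exp (2 * a * T))
        - ∫ r in (0:ℝ)..T, (∫ u in (0:ℝ)..r, h u) * (2 * a * Real.exp (2 * a * r)) := by
    rw [hsplit, hstep2, hswap, hinner, hout]; ring
  rw [hE]
  -- bound the two pieces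
  have habs2 : |∫ r in (0:ℝ)..T, (∫ u in (0:ℝ)..r, h u) * (2 * a * Real.exp (2 * a * r))|
      ≤ W * (1 - Real.exp (2 * a * T)) := by
    have hint_abs : IntervalIntegrable
        (fun r => |(∫ u in (0:ℝ)..r, h u) * (2 * a * Real.exp (2 * a * r))|) volume 0 T :=
      ((hFc.mul cont2).abs).intervalIntegrable _ _
    have hint_bd : IntervalIntegrable
        (fun r => W * ((2 * (-a)) * Real.exp (2 * a * r))) volume 0 T :=
      (continuous_const.mul (continuous_const.mul
        (Real.continuous_exp.comp (continuous_const.mul continuous_id)))).intervalIntegrable _ _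
    calc |∫ r in (0:ℝ)..T, (∫ u in (0:ℝ)..r, h u) * (2 * a * Real.exp (2 * a * r))|
        ≤ ∫ r in (0:ℝ)..T, |(∫ u in (0:ℝ)..r, h u) * (2 * a * Real.exp (2 * a * r))| :=
          intervalIntegral.abs_integral_le_integral_abs hT0
      _ ≤ ∫ r in (0:ℝ)..T, W * ((2 * (-a)) * Real.exp (2 * a * r)) := by
          refine intervalIntegral.integral_mono_on hT0 hint_abs hint_bd fun r hr => ?_
          rw [abs_mul]
          have h1 : |2 * a * Real.exp (2 * a * r)| = (2 * (-a)) * Real.exp (2 * a * r) := by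
            rw [abs_mul, abs_of_pos (Real.exp_pos _), abs_of_nonpos (by linarith)]; ring
          rw [h1]
          refine mul_le_mul_of_nonneg_right (hFW r hr) ?_
          have := Real.exp_pos (2 * a * r)
          nlinarith
      _ = W * (1 - Real.exp (2 * a * T)) := by
          rw [intervalIntegral.integral_const_mul]
          congr 1
          have heq : (fun r => (2 * (-a)) * Real.exp (2 * a * r))
              = fun r => (-(2 * a)) * Real.exp ((2 * a) * r) := by
            funext r; ring_nf
          rw [heq, expint_neg]
  have hexpT : Real.exp (2 * a * T) ≤ 1 :=
    Real.exp_le_one_iff.2 (mul_nonpos_of_nonpos_of_nonneg (by linarith) hT0)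
  have hexpT0 : 0 < Real.exp (2 * a * T) := Real.exp_pos _
  have hFT : |∫ u in (0:ℝ)..T, h u| ≤ W := hFW T (Set.right_mem_Icc.2 hT0)
  calc |(∫ u in (0:ℝ)..T, h u) * (1 + Real.exp (2 * a * T))
        - ∫ r in (0:ℝ)..T, (∫ u in (0:ℝ)..r, h u) * (2 * a * Real.exp (2 * a * r))|
      ≤ |(∫ u in (0:ℝ)..T, h u) * (1 + Real.exp (2 * a * T))|
        + |∫ r in (0:ℝ)..T, (∫ u in (0:ℝ)..r, h u) * (2 * a * Real.exp (2 * a * r))| :=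
        abs_sub _ _
    _ ≤ W * (1 + Real.exp (2 * a * T)) + W * (1 - Real.exp (2 * a * T)) := by
        refine add_le_add ?_ habs2
        rw [abs_mul, abs_of_pos (show (0:ℝ) < 1 + Real.exp (2 * a * T) by linarith)]
        exact mul_le_mul_of_nonneg_right hFT (by linarith)
    _ = 2 * W := by ring

private lemma eps_continuous (a : ℝ) (f : ℝ → ℝ) (hf : Measurable f)
    {Cf : ℝ} (hfb : ∀ x, |f x| ≤ Cf) : Continuous (epsTransform a f) := by
  have hψ : ∀ c d : ℝ, IntervalIntegrable
      (fun v => Real.exp (-(a * v)) * f v * (1 + Real.exp (2 * a * v))) volume c d := by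
    intro c d
    have h1 : IntervalIntegrable (fun v => Real.exp (-(a * v)) * f v) volume c d :=
      (II_of_bdd hf hfb c d).continuousOn_mul
        (Continuous.continuousOn
          (Real.continuous_exp.comp (continuous_const.mul continuous_id).neg))
    exact h1.mul_continuousOn
      (Continuous.continuousOn (continuous_const.add
        (Real.continuous_exp.comp (continuous_const.mul continuous_id))))
  have hP : Continuous fun t => ∫ v in (0:ℝ)..t,
      Real.exp (-(a * v)) * f v * (1 + Real.exp (2 * a * v)) :=
    intervalIntegral.continuous_primitive hψ 0
  have heq : epsTransform a f = fun t => a * (Real.exp (a * t)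
      * ∫ v in (0:ℝ)..t, Real.exp (-(a * v)) * f v * (1 + Real.exp (2 * a * v))) := by
    funext t
    simp only [epsTransform]
    congr 1
    rw [← intervalIntegral.integral_const_mul]
    refine intervalIntegral.integral_congr fun v _ => ?_
    rw [show a * (t - v) = a * t + -(a * v) by ring, Real.exp_add]
    ring
  rw [heq]
  exact continuous_const.mul
    ((Real.continuous_exp.comp (continuous_const.mul continuous_id)).mul hP)

private lemma key_bound (a : ℝ) (ha : a ≤ 0) {n : ℝ} (hn : 0 ≤ n)
    (f g : ℝ → ℝ) (hf : Measurable f) (hg : Measurable g)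
    {Cf Cg : ℝ} (hfb : ∀ x, |f x| ≤ Cf) (hgb : ∀ x, |g x| ≤ Cg)
    (W : ℝ)
    (hW : ∀ v ∈ Set.Icc (0:ℝ) n, ∀ T ∈ Set.Icc (0:ℝ) (n - v),
      |∫ u in (0:ℝ)..T, f (u + v) * g u| ≤ W)
    {t : ℝ} (ht : t ∈ Set.Icc (0:ℝ) n) :
    |∫ s in (0:ℝ)..t, f s * epsTransform a g s| ≤ 2 * W := by
  obtain ⟨ht0, htn⟩ := ht
  have hCf : 0 ≤ Cf := le_trans (abs_nonneg _) (hfb 0)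
  have hCg : 0 ≤ Cg := le_trans (abs_nonneg _) (hgb 0)
  -- Step A: the integrand as an inner integral
  have stepA : ∀ s : ℝ, f s * epsTransform a g s = ∫ w in (0:ℝ)..s,
      (a * Real.exp (a * w)) * (f s * (g (s - w) * (1 + Real.exp (2 * a * (s - w))))) := by
    intro s
    have h0 : epsTransform a g s = a * ∫ w in (0:ℝ)..s,
        Real.exp (a * w) * g (s - w) * (1 + Real.exp (2 * a * (s - w))) := by
      simp only [epsTransform]
      congr 1
      have h1 : (fun v => Real.exp (a * (s - v)) * g v * (1 + Real.exp (2 * a * v)))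
          = fun v => (fun w => Real.exp (a * w) * g (s - w)
            * (1 + Real.exp (2 * a * (s - w)))) (s - v) := by
        funext v; simp only [sub_sub_cancel]
      have h2 := intervalIntegral.integral_comp_sub_left (a := 0) (b := s)
        (fun w => Real.exp (a * w) * g (s - w) * (1 + Real.exp (2 * a * (s - w)))) s
      simp only [sub_self, sub_zero] at h2
      rw [h1]; exact h2
    rw [h0, ← mul_assoc, ← intervalIntegral.integral_const_mul]
    exact intervalIntegral.integral_congr fun w _ => by ring
  -- Step B: swap via the triangle lemma
  have hKm : Measurable (fun p : ℝ × ℝ => (a * Real.exp (a * p.2))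
      * (f p.1 * (g (p.1 - p.2) * (1 + Real.exp (2 * a * (p.1 - p.2)))))) := by
    refine Measurable.mul ?_ ?_
    · exact (Real.measurable_exp.comp (measurable_snd.const_mul a)).const_mul a
    · exact (hf.comp measurable_fst).mul
        ((hg.comp (measurable_fst.sub measurable_snd)).mul
          ((Real.measurable_exp.comp
            ((measurable_fst.sub measurable_snd).const_mul (2 * a))).const_add 1))
  have hKb : ∀ s ∈ Set.Icc (0:ℝ) t, ∀ w ∈ Set.Icc (0:ℝ) t,
      |(a * Real.exp (a * w)) * (f s * (g (s - w) * (1 + Real.exp (2 * a * (s - w)))))|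
        ≤ (-a) * (Cf * (Cg * (1 + Real.exp (2 * (-a) * t)))) := by
    intro s hs w hw
    have e1 : |a * Real.exp (a * w)| ≤ -a := by
      rw [abs_mul, abs_of_nonpos ha, abs_of_pos (Real.exp_pos _)]
      have := Real.exp_le_one_iff.2 (mul_nonpos_of_nonpos_of_nonneg ha hw.1)
      nlinarith [Real.exp_pos (a * w)]
    have e2 : |g (s - w) * (1 + Real.exp (2 * a * (s - w)))|
        ≤ Cg * (1 + Real.exp (2 * (-a) * t)) := by
      rw [abs_mul]
      refine mul_le_mul (hgb _) ?_ (abs_nonneg _) hCg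
      rw [abs_of_pos (by positivity)]
      have h5 : 2 * a * (s - w) ≤ 2 * (-a) * t := by
        nlinarith [mul_nonneg (neg_nonneg.2 ha) (by linarith [hs.1, hw.2] : (0:ℝ) ≤ s - w + t)]
      linarith [Real.exp_le_exp.2 h5]
    rw [abs_mul]
    refine mul_le_mul e1 ?_ (abs_nonneg _) (neg_nonneg.2 ha)
    rw [abs_mul]
    exact mul_le_mul (hfb s) e2 (abs_nonneg _) hCf
  obtain ⟨hswapB, hIntB⟩ := triangle_swap
    (fun s w => (a * Real.exp (a * w))
      * (f s * (g (s - w) * (1 + Real.exp (2 * a * (s - w)))))) hKm ht0 hKb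
  -- Step C: substitution in the inner integral
  have stepC : ∀ w : ℝ,
      (∫ s in w..t, (a * Real.exp (a * w))
        * (f s * (g (s - w) * (1 + Real.exp (2 * a * (s - w))))))
      = (a * Real.exp (a * w))
        * ∫ u in (0:ℝ)..(t - w), f (u + w) * g u * (1 + Real.exp (2 * a * u)) := by
    intro w
    rw [intervalIntegral.integral_const_mul]
    congr 1
    have h1 : (fun s => f s * (g (s - w) * (1 + Real.exp (2 * a * (s - w)))))
        = fun s => (fun u => f (u + w) * g u * (1 + Real.exp (2 * a * u))) (s - w) := by
      funext s
      have hsw : s - w + w = s := by ring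
      simp only [hsw]; ring
    have h2 := intervalIntegral.integral_comp_sub_right (a := w) (b := t)
      (fun u => f (u + w) * g u * (1 + Real.exp (2 * a * u))) w
    simp only [sub_self] at h2
    rw [h1]; exact h2
  -- put the pieces together
  have hX : (∫ s in (0:ℝ)..t, f s * epsTransform a g s)
      = ∫ w in (0:ℝ)..t, (a * Real.exp (a * w))
        * ∫ u in (0:ℝ)..(t - w), f (u + w) * g u * (1 + Real.exp (2 * a * u)) := by
    rw [intervalIntegral.integral_congr (fun s _ => stepA s), hswapB]
    exact intervalIntegral.integral_congr fun w _ => stepC w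
  rw [hX]
  -- bound
  have hJ : ∀ w ∈ Set.Icc (0:ℝ) t,
      |∫ u in (0:ℝ)..(t - w), f (u + w) * g u * (1 + Real.exp (2 * a * u))| ≤ 2 * W := by
    intro w hw
    have hhm : Measurable fun u => f (u + w) * g u :=
      (hf.comp (measurable_id.add_const w)).mul hg
    have hhb : ∀ x, |f (x + w) * g x| ≤ Cf * Cg := fun x => by
      rw [abs_mul]; exact mul_le_mul (hfb _) (hgb _) (abs_nonneg _) hCf
    exact inner_bound a ha (fun u => f (u + w) * g u) hhm hhb W (by linarith [hw.2])
      (fun r hr => hW w ⟨hw.1, hw.2.trans htn⟩ r ⟨hr.1, hr.2.trans (by linarith)⟩)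
  have hW0 : 0 ≤ W :=
    le_trans (abs_nonneg _) (hW 0 ⟨le_refl _, hn⟩ 0 ⟨le_refl _, by linarith⟩)
  have heqI : (fun w => ∫ s in w..t, (a * Real.exp (a * w))
        * (f s * (g (s - w) * (1 + Real.exp (2 * a * (s - w))))))
      = fun w => (a * Real.exp (a * w))
        * ∫ u in (0:ℝ)..(t - w), f (u + w) * g u * (1 + Real.exp (2 * a * u)) :=
    funext stepC
  have hint1 : IntervalIntegrable (fun w => |(a * Real.exp (a * w))
      * ∫ u in (0:ℝ)..(t - w), f (u + w) * g u * (1 + Real.exp (2 * a * u))|) volume 0 t :=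
    (heqI ▸ hIntB).abs
  have hint2 : IntervalIntegrable
      (fun w => ((-a) * Real.exp (a * w)) * (2 * W)) volume 0 t :=
    ((continuous_const.mul (Real.continuous_exp.comp
      (continuous_const.mul continuous_id))).mul continuous_const).intervalIntegrable _ _
  calc |∫ w in (0:ℝ)..t, (a * Real.exp (a * w))
        * ∫ u in (0:ℝ)..(t - w), f (u + w) * g u * (1 + Real.exp (2 * a * u))|
      ≤ ∫ w in (0:ℝ)..t, |(a * Real.exp (a * w))
        * ∫ u in (0:ℝ)..(t - w), f (u + w) * g u * (1 + Real.exp (2 * a * u))| :=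
        intervalIntegral.abs_integral_le_integral_abs ht0
    _ ≤ ∫ w in (0:ℝ)..t, ((-a) * Real.exp (a * w)) * (2 * W) := by
        refine intervalIntegral.integral_mono_on ht0 hint1 hint2 fun w hw => ?_
        rw [abs_mul]
        have h1 : |a * Real.exp (a * w)| = (-a) * Real.exp (a * w) := by
          rw [abs_mul, abs_of_nonpos ha, abs_of_pos (Real.exp_pos _)]
        rw [h1]
        exact mul_le_mul_of_nonneg_left (hJ w hw)
          (mul_nonneg (neg_nonneg.2 ha) (Real.exp_pos _).le)
    _ = (1 - Real.exp (a * t)) * (2 * W) := by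
        rw [intervalIntegral.integral_mul_const, expint_neg]
    _ ≤ 2 * W := by
        nlinarith [Real.exp_pos (a * t)]

/-- Lemma A.1 (first part): sup_{0≤t≤n} |τ_{f,g}(t)| ≤ 4 ϖ*_{f,g}; `W` is an upper
bound on both shifted-correlation families defining ϖ*_{f,g}. -/
theorem tau_bound (a : ℝ) (ha : a ≤ 0) (n : ℝ) (hn : 1 ≤ n)
    (f g : ℝ → ℝ) (hf : Measurable f) (hg : Measurable g)
    (hfb : ∃ C, ∀ x, |f x| ≤ C) (hgb : ∃ C, ∀ x, |g x| ≤ C)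
    (W : ℝ)
    (hW1 : ∀ v ∈ Set.Icc (0:ℝ) n, ∀ t ∈ Set.Icc (0:ℝ) (n - v),
      |∫ u in (0:ℝ)..t, f (u + v) * g u| ≤ W)
    (hW2 : ∀ v ∈ Set.Icc (0:ℝ) n, ∀ t ∈ Set.Icc (0:ℝ) (n - v),
      |∫ u in (0:ℝ)..t, g (u + v) * f u| ≤ W) :
    ∀ t ∈ Set.Icc (0:ℝ) n, |tauTransform a f g t| ≤ 4 * W := by
  obtain ⟨Cf, hfb⟩ := hfb
  obtain ⟨Cg, hgb⟩ := hgb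
  intro t ht
  obtain ⟨ht0, htn⟩ := ht
  have hn0 : (0:ℝ) ≤ n := by linarith
  have hCf : 0 ≤ Cf := le_trans (abs_nonneg _) (hfb 0)
  have hW0 : 0 ≤ W := le_trans (abs_nonneg _)
    (hW1 0 ⟨le_refl _, hn0⟩ 0 ⟨le_refl _, by linarith⟩)
  have hepsg : Continuous (epsTransform a g) := eps_continuous a g hg hgb
  have hepsf : Continuous (epsTransform a f) := eps_continuous a f hf hfb
  have h2fg : IntervalIntegrable (fun s => 2 * f s * g s) volume 0 t := by
    refine II_of_bdd (((hf.const_mul 2)).mul hg) (C := 2 * Cf * Cg) (fun x => ?_) 0 t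
    show |2 * f x * g x| ≤ 2 * Cf * Cg
    rw [abs_mul, abs_mul, abs_two]
    refine mul_le_mul ?_ (hgb x) (abs_nonneg _) (by positivity)
    exact mul_le_mul_of_nonneg_left (hfb x) (by norm_num)
  have hfe : IntervalIntegrable (fun s => f s * epsTransform a g s) volume 0 t :=
    (II_of_bdd hf hfb 0 t).mul_continuousOn hepsg.continuousOn
  have hef : IntervalIntegrable (fun s => epsTransform a f s * g s) volume 0 t :=
    (II_of_bdd hg hgb 0 t).continuousOn_mul hepsf.continuousOn
  have hτ : tauTransform a f g t = (1 / 2) * ((∫ s in (0:ℝ)..t, 2 * f s * g s)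
      + (∫ s in (0:ℝ)..t, f s * epsTransform a g s)
      + ∫ s in (0:ℝ)..t, epsTransform a f s * g s) := by
    simp only [tauTransform]
    rw [intervalIntegral.integral_add (h2fg.add hfe) hef,
      intervalIntegral.integral_add h2fg hfe]
  rw [hτ]
  have b1 : |∫ s in (0:ℝ)..t, 2 * f s * g s| ≤ 2 * W := by
    have heq : (∫ s in (0:ℝ)..t, 2 * f s * g s) = 2 * ∫ s in (0:ℝ)..t, f s * g s := by
      rw [← intervalIntegral.integral_const_mul]
      exact intervalIntegral.integral_congr fun s _ => by ring
    have h00 : |∫ s in (0:ℝ)..t, f s * g s| ≤ W := by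
      have := hW1 0 ⟨le_refl _, hn0⟩ t ⟨ht0, by linarith⟩
      simpa using this
    rw [heq, abs_mul, abs_two]
    linarith
  have b2 : |∫ s in (0:ℝ)..t, f s * epsTransform a g s| ≤ 2 * W :=
    key_bound a ha hn0 f g hf hg hfb hgb W hW1 ⟨ht0, htn⟩
  have b3 : |∫ s in (0:ℝ)..t, epsTransform a f s * g s| ≤ 2 * W := by
    have heq : (∫ s in (0:ℝ)..t, epsTransform a f s * g s)
        = ∫ s in (0:ℝ)..t, g s * epsTransform a f s :=
      intervalIntegral.integral_congr fun s _ => mul_comm _ _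
    rw [heq]
    exact key_bound a ha hn0 g f hg hf hgb hfb W hW2 ⟨ht0, htn⟩
  rw [abs_mul]
  have habs : |(∫ s in (0:ℝ)..t, 2 * f s * g s)
      + (∫ s in (0:ℝ)..t, f s * epsTransform a g s)
      + ∫ s in (0:ℝ)..t, epsTransform a f s * g s| ≤ 6 * W :=
    calc |(∫ s in (0:ℝ)..t, 2 * f s * g s)
        + (∫ s in (0:ℝ)..t, f s * epsTransform a g s)
        + ∫ s in (0:ℝ)..t, epsTransform a f s * g s|
        ≤ |(∫ s in (0:ℝ)..t, 2 * f s * g s)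
          + (∫ s in (0:ℝ)..t, f s * epsTransform a g s)|
          + |∫ s in (0:ℝ)..t, epsTransform a f s * g s| := abs_add_le _ _
      _ ≤ (|∫ s in (0:ℝ)..t, 2 * f s * g s|
          + |∫ s in (0:ℝ)..t, f s * epsTransform a g s|)
          + |∫ s in (0:ℝ)..t, epsTransform a f s * g s| :=
          add_le_add_left (abs_add_le _ _) _
      _ ≤ 6 * W := by linarith
  calc |(1:ℝ)/2| * |(∫ s in (0:ℝ)..t, 2 * f s * g s)
      + (∫ s in (0:ℝ)..t, f s * epsTransform a g s)
      + ∫ s in (0:ℝ)..t, epsTransform a f s * g s|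
      ≤ |(1:ℝ)/2| * (6 * W) := by
        refine mul_le_mul_of_nonneg_left habs (abs_nonneg _)
    _ ≤ 4 * W := by rw [abs_of_pos (by norm_num : (0:ℝ) < 1/2)]; linarith
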